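/- Fix d⁰ ∈ ℝ, F₀ ∈ ℝ, and K > 0. The envelope function M_δ(x, y) = (|y| + |F₀| + 2)·1(x ∈ [d⁰ - δ, d⁰ + δ]) dominates pointwise every function in the class M_δ = {(y - F)(1(x ≤ d) - 1(x ≤ d⁰)) : |d - d⁰| ≤ δ, F ∈ [F₀ - 1, F₀ + 1]}, and if the conditional second moment x ↦ E[Y²|X=x] and p_X are bounded on [d⁰ - δ₀, d⁰ + δ₀], then E[M_δ(X, Y)²] ≤ C·δ for all δ < δ₀ and a constant C independent of δ. -/

import Mathlib

open MeasureTheory ProbabilityTheory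

/-- the envelope function
`M_δ(x,y) = (|y| + |F₀| + 2) 1(x ∈ [d⁰-δ, d⁰+δ])` dominates every function
`(y - F)(1(x ≤ d) - 1(x ≤ d⁰))` with `|d - d⁰| ≤ δ`, `F ∈ [F₀-1, F₀+1]`; and if the
conditional second moment of `Y` given `X` and the density `p_X` are bounded near `d⁰`,
then `E[M_δ(X,Y)²] ≤ C δ` for all `δ < δ₀`, with `C` independent of `δ`. -/
theorem stmt17 {Ω : Type*} [MeasureSpace Ω] [IsProbabilityMeasure (ℙ : Measure Ω)]
    (X Y : Ω → ℝ) (hX : Measurable X) (hYm : Measurable Y) (hY2 : MemLp Y 2 ℙ)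
    (d0 F0 δ0 : ℝ) (hδ0 : 0 < δ0)
    (pX : ℝ → ℝ) (hpm : Measurable pX) (hp0 : ∀ x, 0 ≤ pX x)
    (hdens : Measure.map X ℙ
      = (volume : Measure ℝ).withDensity fun x => ENNReal.ofReal (pX x))
    (Cp : ℝ) (hCp : ∀ x ∈ Set.Icc (d0 - δ0) (d0 + δ0), pX x ≤ Cp)
    (C2 : ℝ) (hC2 : ∀ s : Set ℝ, MeasurableSet s → s ⊆ Set.Icc (d0 - δ0) (d0 + δ0) →
      (∫ ω in X ⁻¹' s, (Y ω) ^ 2 ∂ℙ) ≤ C2 * (ℙ (X ⁻¹' s)).toReal) :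
    (∀ δ d F x y : ℝ, |d - d0| ≤ δ → F ∈ Set.Icc (F0 - 1) (F0 + 1) →
      |(y - F) * ((if x ≤ d then (1 : ℝ) else 0) - (if x ≤ d0 then (1 : ℝ) else 0))|
        ≤ (|y| + |F0| + 2) * (if x ∈ Set.Icc (d0 - δ) (d0 + δ) then (1 : ℝ) else 0)) ∧
    (∃ C : ℝ, ∀ δ : ℝ, 0 < δ → δ < δ0 →
      (∫ ω, ((|Y ω| + |F0| + 2)
          * (if X ω ∈ Set.Icc (d0 - δ) (d0 + δ) then (1 : ℝ) else 0)) ^ 2 ∂ℙ)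
        ≤ C * δ) := by
  constructor
  · -- pointwise domination
    intro δ d F x y hd hF
    rcases abs_le.mp hd with ⟨hd1, hd2⟩
    rcases hF with ⟨hF1, hF2⟩
    by_cases hx : x ∈ Set.Icc (d0 - δ) (d0 + δ)
    · rw [if_pos hx, mul_one]
      have h1 : |(if x ≤ d then (1 : ℝ) else 0) - (if x ≤ d0 then (1 : ℝ) else 0)| ≤ 1 := by
        split_ifs <;> norm_num
      have h2 : |y - F| ≤ |y| + |F0| + 2 := by
        have := abs_sub_abs_le_abs_sub F F0
        have hFa : |F - F0| ≤ 1 := abs_le.mpr ⟨by linarith, by linarith⟩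
        calc |y - F| ≤ |y| + |F| := abs_sub _ _
          _ ≤ |y| + |F0| + 2 := by linarith
      calc |(y - F) * ((if x ≤ d then (1 : ℝ) else 0) - (if x ≤ d0 then (1 : ℝ) else 0))|
          = |y - F| * |(if x ≤ d then (1 : ℝ) else 0) - (if x ≤ d0 then (1 : ℝ) else 0)| :=
            abs_mul _ _
        _ ≤ (|y| + |F0| + 2) * 1 := by
            apply mul_le_mul h2 h1 (abs_nonneg _) (by positivity)
        _ = |y| + |F0| + 2 := mul_one _
    · rw [if_neg hx, mul_zero]
      have hout : x < d0 - δ ∨ d0 + δ < x := by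
        rcases lt_or_ge x (d0 - δ) with h | h
        · exact Or.inl h
        · right
          by_contra h2
          push_neg at h2
          exact hx ⟨h, h2⟩
      have heq : (if x ≤ d then (1 : ℝ) else 0) = (if x ≤ d0 then (1 : ℝ) else 0) := by
        rcases hout with h | h
        · rw [if_pos (by linarith), if_pos (by linarith)]
        · rw [if_neg (by push_neg; linarith), if_neg (by push_neg; linarith)]
      rw [heq, sub_self, mul_zero, abs_zero]
  · -- the L² bound on the envelope
    set c : ℝ := |F0| + 2 with hc
    have hc0 : (0 : ℝ) ≤ c := by positivity
    have hCp0 : 0 ≤ Cp :=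
      le_trans (hp0 d0) (hCp d0 ⟨by linarith, by linarith⟩)
    refine ⟨(2 * max C2 0 + 2 * c ^ 2) * (Cp * 2), fun δ hδ hδlt => ?_⟩
    set S : Set ℝ := Set.Icc (d0 - δ) (d0 + δ) with hS
    have hSm : MeasurableSet S := measurableSet_Icc
    have hSsub : S ⊆ Set.Icc (d0 - δ0) (d0 + δ0) :=
      Set.Icc_subset_Icc (by linarith) (by linarith)
    have hA : MeasurableSet (X ⁻¹' S) := hX hSm
    -- rewrite the integral as a set integral
    have heq : ∀ ω, ((|Y ω| + |F0| + 2) * (if X ω ∈ S then (1 : ℝ) else 0)) ^ 2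
        = Set.indicator (X ⁻¹' S) (fun ω => (|Y ω| + c) ^ 2) ω := by
      intro ω
      by_cases h : X ω ∈ S <;> simp [Set.indicator, h, hc, add_assoc]
    have hrw : (∫ ω, ((|Y ω| + |F0| + 2)
          * (if X ω ∈ S then (1 : ℝ) else 0)) ^ 2 ∂ℙ)
        = ∫ ω in X ⁻¹' S, (|Y ω| + c) ^ 2 ∂ℙ := by
      simp_rw [heq]
      exact integral_indicator hA
    rw [hrw]
    -- integrability facts
    have hYsq : Integrable (fun ω => (Y ω) ^ 2) ℙ := by
      have := hY2.integrable_sq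
      simpa [sq] using this
    have hint2 : Integrable (fun ω => 2 * (Y ω) ^ 2 + 2 * c ^ 2) ℙ :=
      (hYsq.const_mul 2).add (integrable_const _)
    have hintEnv : Integrable (fun ω => (|Y ω| + c) ^ 2) ℙ := by
      have hY1 : Integrable Y ℙ := hY2.integrable (by norm_num)
      have : (fun ω => (|Y ω| + c) ^ 2)
          = fun ω => (Y ω) ^ 2 + (2 * c) * |Y ω| + c ^ 2 := by
        funext ω; rw [add_sq, sq_abs]; ring
      rw [this]
      exact ((hYsq.add ((hY1.abs).const_mul (2 * c))).add (integrable_const _))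
    -- pointwise bound (|Y|+c)² ≤ 2Y² + 2c²
    have hpt : ∀ ω, (|Y ω| + c) ^ 2 ≤ 2 * (Y ω) ^ 2 + 2 * c ^ 2 := by
      intro ω
      have h1 : (|Y ω| - c) ^ 2 ≥ 0 := sq_nonneg _
      have h2 : |Y ω| ^ 2 = (Y ω) ^ 2 := sq_abs _
      nlinarith
    have hmono : (∫ ω in X ⁻¹' S, (|Y ω| + c) ^ 2 ∂ℙ)
        ≤ ∫ ω in X ⁻¹' S, (2 * (Y ω) ^ 2 + 2 * c ^ 2) ∂ℙ :=
      setIntegral_mono_on hintEnv.integrableOn hint2.integrableOn hA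
        (fun ω _ => hpt ω)
    have hsplit : (∫ ω in X ⁻¹' S, (2 * (Y ω) ^ 2 + 2 * c ^ 2) ∂ℙ)
        = 2 * (∫ ω in X ⁻¹' S, (Y ω) ^ 2 ∂ℙ) + 2 * c ^ 2 * (ℙ (X ⁻¹' S)).toReal := by
      rw [integral_add ((hYsq.const_mul 2).integrableOn) (integrableOn_const
        (measure_ne_top _ _))]
      rw [integral_const_mul, setIntegral_const, smul_eq_mul, Measure.real]
      ring
    have hC2' : (∫ ω in X ⁻¹' S, (Y ω) ^ 2 ∂ℙ) ≤ max C2 0 * (ℙ (X ⁻¹' S)).toReal := by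
      refine le_trans (hC2 S hSm hSsub) ?_
      exact mul_le_mul_of_nonneg_right (le_max_left _ _) ENNReal.toReal_nonneg
    -- bound on ℙ(X ⁻¹' S)
    have hmeas : (ℙ (X ⁻¹' S)).toReal ≤ Cp * (2 * δ) := by
      have h1 : ℙ (X ⁻¹' S) = Measure.map X ℙ S := (Measure.map_apply hX hSm).symm
      have h2 : Measure.map X ℙ S = ∫⁻ x in S, ENNReal.ofReal (pX x) ∂volume := by
        rw [hdens, withDensity_apply _ hSm]
      have h3 : (∫⁻ x in S, ENNReal.ofReal (pX x) ∂volume)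
          ≤ ENNReal.ofReal Cp * volume S := by
        calc (∫⁻ x in S, ENNReal.ofReal (pX x) ∂volume)
            ≤ ∫⁻ _ in S, ENNReal.ofReal Cp ∂volume := by
              refine setLIntegral_mono measurable_const (fun x hx => ?_)
              exact ENNReal.ofReal_le_ofReal (hCp x (hSsub hx))
          _ = ENNReal.ofReal Cp * volume S := by
              rw [setLIntegral_const]
      have hvol : volume S = ENNReal.ofReal (2 * δ) := by
        rw [hS, Real.volume_Icc]
        congr 1
        ring
      have h4 : ℙ (X ⁻¹' S) ≤ ENNReal.ofReal (Cp * (2 * δ)) := by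
        rw [h1, h2]
        calc (∫⁻ x in S, ENNReal.ofReal (pX x) ∂volume)
            ≤ ENNReal.ofReal Cp * volume S := h3
          _ = ENNReal.ofReal (Cp * (2 * δ)) := by
              rw [hvol, ← ENNReal.ofReal_mul hCp0]
      calc (ℙ (X ⁻¹' S)).toReal ≤ (ENNReal.ofReal (Cp * (2 * δ))).toReal :=
            ENNReal.toReal_mono ENNReal.ofReal_ne_top h4
        _ = Cp * (2 * δ) := ENNReal.toReal_ofReal (by positivity)
    have hC0 : (0 : ℝ) ≤ 2 * max C2 0 + 2 * c ^ 2 := by positivity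
    calc (∫ ω in X ⁻¹' S, (|Y ω| + c) ^ 2 ∂ℙ)
        ≤ 2 * (∫ ω in X ⁻¹' S, (Y ω) ^ 2 ∂ℙ) + 2 * c ^ 2 * (ℙ (X ⁻¹' S)).toReal := by
          rw [← hsplit]; exact hmono
      _ ≤ 2 * (max C2 0 * (ℙ (X ⁻¹' S)).toReal) + 2 * c ^ 2 * (ℙ (X ⁻¹' S)).toReal := by
          have := hC2'
          linarith
      _ = (2 * max C2 0 + 2 * c ^ 2) * (ℙ (X ⁻¹' S)).toReal := by ring
      _ ≤ (2 * max C2 0 + 2 * c ^ 2) * (Cp * (2 * δ)) :=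
          mul_le_mul_of_nonneg_left hmeas hC0
      _ = (2 * max C2 0 + 2 * c ^ 2) * (Cp * 2) * δ := by ring
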